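/- Let D be a real m×n matrix with singular values σ₁ ≥ σ₂ ≥ … ≥ σ_q ≥ 0 (q = min(m,n)), and let λ > 0. Then for every real m×n matrix D₀ with rank(D₀) = r ≥ 1 and every real n×n matrix C satisfying D₀ = D₀ C, the objective value of the PCE problem is bounded below as (1/2)‖C‖_F² + (λ/2)‖D − D₀‖_F² ≥ (1/2) r + (λ/2) Σᵢ₌ᵣ₊₁^q σᵢ². -/

import Mathlib

open Matrix

/-- The Frobenius norm of a real matrix: ‖M‖_F = sqrt(trace(M Mᵀ)). -/
noncomputable def frobeniusNorm {m n : ℕ} (M : Matrix (Fin m) (Fin n) ℝ) : ℝ :=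
  Real.sqrt (Matrix.trace (M * Mᵀ))

open Finset


lemma trace_sq {a b : ℕ} (M : Matrix (Fin a) (Fin b) ℝ) :
    trace (M * Mᵀ) = ∑ i, ∑ j, (M i j)^2 := by
  simp [Matrix.trace, Matrix.mul_apply, Matrix.diag, sq]

lemma trace_sq_nonneg {a b : ℕ} (M : Matrix (Fin a) (Fin b) ℝ) :
    0 ≤ trace (M * Mᵀ) := by
  rw [trace_sq]; positivity

lemma L1 {a b k : ℕ} (M : Matrix (Fin a) (Fin b) ℝ) (W : Matrix (Fin b) (Fin k) ℝ)
    (hW : Wᵀ * W = 1) :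
    trace ((M*W)ᵀ * (M*W)) ≤ trace (Mᵀ * M) := by
  set N : Matrix (Fin a) (Fin b) ℝ := M - M * (W * Wᵀ) with hN
  have key : trace (Nᵀ * N) = trace (Mᵀ * M) - trace ((M*W)ᵀ * (M*W)) := by
    have h1 : Nᵀ * N = Mᵀ*M - ((W*Wᵀ)*Mᵀ)*M - (Mᵀ*M)*(W*Wᵀ) + (((W*Wᵀ)*Mᵀ)*M)*(W*Wᵀ) := by
      simp only [hN, Matrix.transpose_sub, Matrix.transpose_mul, Matrix.transpose_transpose,
        Matrix.sub_mul, Matrix.mul_sub, Matrix.mul_assoc]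
      abel
    have h2 : trace (((W*Wᵀ)*Mᵀ)*M) = trace ((M*W)ᵀ * (M*W)) := by
      rw [show ((W*Wᵀ)*Mᵀ)*M = W*(Wᵀ*(Mᵀ*M)) by simp only [Matrix.mul_assoc],
        Matrix.trace_mul_comm]
      simp only [Matrix.transpose_mul, Matrix.mul_assoc]
    have h3 : trace ((Mᵀ*M)*(W*Wᵀ)) = trace ((M*W)ᵀ * (M*W)) := by
      rw [show (Mᵀ*M)*(W*Wᵀ) = (Mᵀ * (M * W)) * Wᵀ by simp only [Matrix.mul_assoc],
        Matrix.trace_mul_comm]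
      simp only [Matrix.transpose_mul, Matrix.mul_assoc]
    have h4 : trace ((((W*Wᵀ)*Mᵀ)*M)*(W*Wᵀ)) = trace ((M*W)ᵀ * (M*W)) := by
      rw [show (((W*Wᵀ)*Mᵀ)*M)*(W*Wᵀ) = W*((Wᵀ * (Mᵀ * (M * W)))*Wᵀ) by
        simp only [Matrix.mul_assoc], Matrix.trace_mul_comm]
      rw [show Wᵀ * (Mᵀ * (M * W)) * Wᵀ * W = (Wᵀ * (Mᵀ * (M * W))) * (Wᵀ * W) by
        simp only [Matrix.mul_assoc], hW, Matrix.mul_one]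
      simp only [Matrix.transpose_mul, Matrix.mul_assoc]
    simp only [Matrix.trace_add, Matrix.trace_sub, h1, h2, h3, h4]
    ring
  have hpos : 0 ≤ trace (Nᵀ * N) := by
    rw [Matrix.trace_mul_comm]; exact trace_sq_nonneg N
  linarith
open Matrix Finset

lemma L2 {n k : ℕ} (S : Submodule ℝ (EuclideanSpace ℝ (Fin n)))
    (hS : Module.finrank ℝ S = k) :
    ∃ W : Matrix (Fin n) (Fin k) ℝ, Wᵀ * W = 1 ∧ ∀ j, WithLp.toLp 2 (fun i => W i j) ∈ S := by
  subst hS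
  obtain b := stdOrthonormalBasis ℝ S
  refine ⟨fun i j => ((b j : S) : EuclideanSpace ℝ (Fin n)) i, ?_, ?_⟩
  · ext i j
    have := b.orthonormal
    rw [orthonormal_iff_ite] at this
    have h := this i j
    simp only [Submodule.coe_inner, PiLp.inner_apply, RCLike.inner_apply, conj_trivial] at h
    simp only [Matrix.mul_apply, Matrix.transpose_apply, Matrix.one_apply]
    rw [← h]
    exact Matrix.mul_apply.trans (Finset.sum_congr rfl fun x _ => mul_comm _ _)
  · intro j
    exact (b j).2

lemma L2' {d k : ℕ} (S : Submodule ℝ (Fin d → ℝ))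
    (hS : Module.finrank ℝ S = k) :
    ∃ W : Matrix (Fin d) (Fin k) ℝ, Wᵀ * W = 1 ∧ ∀ j, (fun i => W i j) ∈ S := by
  set e := (WithLp.linearEquiv 2 ℝ (Fin d → ℝ)).symm with he
  set S' : Submodule ℝ (EuclideanSpace ℝ (Fin d)) := S.map e.toLinearMap with hS'
  have hfr : Module.finrank ℝ S' = k := by
    rw [hS', LinearEquiv.finrank_map_eq, hS]
  obtain ⟨W, hW1, hW2⟩ := L2 S' hfr
  refine ⟨W, hW1, fun j => ?_⟩
  have h := hW2 j
  rw [hS', Submodule.mem_map] at h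
  obtain ⟨y, hy, hyeq⟩ := h
  have : (fun i => W i j) = y := by
    funext i
    have hyeq' := congrArg WithLp.ofLp hyeq
    exact (congrFun hyeq' i).symm
  rw [this]
  exact hy
open Matrix Finset

lemma card_ge (n r : ℕ) : #(Finset.univ.filter (fun i : Fin n => r ≤ (i : ℕ))) = n - r := by
  have h : (Finset.univ.filter (fun i : Fin n => r ≤ (i : ℕ)))
      = (Finset.Ico r n).attachFin (fun m hm => (Finset.mem_Ico.mp hm).2) := by
    ext i
    simp [Finset.mem_attachFin, i.isLt]
  rw [h, Finset.card_attachFin, Nat.card_Ico]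

lemma L3 {n r : ℕ} (hr : r ≤ n) (lamv p : Fin n → ℝ)
    (hmono : ∀ i j : Fin n, i ≤ j → lamv j ≤ lamv i) (hnn : ∀ i, 0 ≤ lamv i)
    (hp0 : ∀ i, 0 ≤ p i) (hp1 : ∀ i, p i ≤ 1) (hsum : ∑ i, p i = (n : ℝ) - r) :
    ∑ i ∈ Finset.univ.filter (fun i : Fin n => r ≤ (i : ℕ)), lamv i ≤ ∑ i, lamv i * p i := by
  set B := Finset.univ.filter (fun i : Fin n => r ≤ (i : ℕ)) with hB
  set A := Finset.univ.filter (fun i : Fin n => ¬ r ≤ (i : ℕ)) with hA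
  have hsplit : ∀ f : Fin n → ℝ, ∑ i, f i = ∑ i ∈ A, f i + ∑ i ∈ B, f i := by
    intro f
    rw [hA, hB, add_comm]
    exact (Finset.sum_filter_add_sum_filter_not Finset.univ (fun i : Fin n => r ≤ (i : ℕ)) f).symm
  -- threshold value
  set t : ℝ := if h : r < n then lamv ⟨r, h⟩ else 0 with ht
  have ht0 : 0 ≤ t := by
    rw [ht]; split
    · exact hnn _
    · exact le_refl 0
  have htlow : ∀ i ∈ A, t ≤ lamv i := by
    intro i hi
    simp only [hA, Finset.mem_filter, not_le] at hi
    by_cases hrn : r < n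
    · rw [ht, dif_pos hrn]
      exact hmono i ⟨r, hrn⟩ (by simp only [Fin.le_def]; omega)
    · rw [ht, dif_neg hrn]
      exact hnn i
  have hthigh : ∀ i ∈ B, lamv i ≤ t := by
    intro i hi
    simp only [hB, Finset.mem_filter] at hi
    have hrn : r < n := lt_of_le_of_lt hi.2 i.isLt
    rw [ht, dif_pos hrn]
    exact hmono ⟨r, hrn⟩ i (by simp only [Fin.le_def]; omega)
  have hcardB : (#B : ℝ) = (n : ℝ) - r := by
    rw [hB, card_ge]
    push_cast [Nat.cast_sub hr]
    ring
  have key : ∑ i ∈ B, (1 - p i) = ∑ i ∈ A, p i := by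
    have h1 : ∑ i ∈ B, (1 - p i) = (#B : ℝ) - ∑ i ∈ B, p i := by
      rw [Finset.sum_sub_distrib, Finset.sum_const, nsmul_eq_mul, mul_one]
    have h2 : ∑ i ∈ A, p i + ∑ i ∈ B, p i = (n : ℝ) - r := by
      rw [← hsplit p]; exact hsum
    rw [h1, hcardB]; linarith
  have e1 : ∑ i ∈ B, lamv i - ∑ i ∈ B, lamv i * p i = ∑ i ∈ B, lamv i * (1 - p i) := by
    rw [← Finset.sum_sub_distrib]; congr 1; ext i; ring
  have e2 : ∑ i ∈ B, lamv i * (1 - p i) ≤ t * ∑ i ∈ B, (1 - p i) := by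
    rw [Finset.mul_sum]
    apply Finset.sum_le_sum
    intro i hi
    have := hthigh i hi
    have := hp1 i
    nlinarith [hp1 i, hthigh i hi]
  have e3 : t * ∑ i ∈ A, p i ≤ ∑ i ∈ A, lamv i * p i := by
    rw [Finset.mul_sum]
    apply Finset.sum_le_sum
    intro i hi
    exact mul_le_mul_of_nonneg_right (htlow i hi) (hp0 i)
  have hBnonneg : 0 ≤ ∑ i ∈ B, lamv i * p i := by
    apply Finset.sum_nonneg; intro i _; exact mul_nonneg (hnn i) (hp0 i)
  calc ∑ i ∈ B, lamv i ≤ ∑ i ∈ B, lamv i * p i + t * ∑ i ∈ B, (1 - p i) := by linarith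
    _ = ∑ i ∈ B, lamv i * p i + t * ∑ i ∈ A, p i := by rw [key]
    _ ≤ ∑ i ∈ B, lamv i * p i + ∑ i ∈ A, lamv i * p i := by linarith
    _ = ∑ i, lamv i * p i := by rw [hsplit (fun i => lamv i * p i)]; ring
open Matrix Finset

lemma trace_conj {a b c : ℕ} (Q : Matrix (Fin a) (Fin b) ℝ) (A : Matrix (Fin b) (Fin c) ℝ)
    (hQ : Qᵀ * Q = 1) : trace ((Q * A)ᵀ * (Q * A)) = trace (Aᵀ * A) := by
  rw [Matrix.transpose_mul,
    show Aᵀ * Qᵀ * (Q * A) = Aᵀ * ((Qᵀ * Q) * A) by simp only [Matrix.mul_assoc],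
    hQ, Matrix.one_mul]


lemma frob_sq {a b : ℕ} (M : Matrix (Fin a) (Fin b) ℝ) :
    (frobeniusNorm M)^2 = trace (M * Mᵀ) :=
  Real.sq_sqrt (trace_sq_nonneg M)


set_option maxHeartbeats 1000000 in
/-- Let D be a real m×n matrix with singular values
σ₁ ≥ … ≥ σ_q ≥ 0 (q = min(m,n), given via a full SVD D = U Σ Vᵀ) and let λ > 0.
Then for every real m×n matrix D₀ of rank r ≥ 1 and every real n×n matrix C
with D₀ = D₀ C, the PCE objective satisfies
(1/2)‖C‖_F² + (λ/2)‖D − D₀‖_F² ≥ (1/2) r + (λ/2) Σ_{i=r+1}^{q} σᵢ². -/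
theorem stmt_10 {m n : ℕ}
    (D : Matrix (Fin m) (Fin n) ℝ)
    (U : Matrix (Fin m) (Fin m) ℝ) (Sig : Matrix (Fin m) (Fin n) ℝ)
    (V : Matrix (Fin n) (Fin n) ℝ)
    (σ : Fin (min m n) → ℝ)
    (hSVD : D = U * Sig * Vᵀ)
    (hU : Uᵀ * U = 1) (hV : Vᵀ * V = 1)
    (hSigdiag : ∀ (i : Fin m) (j : Fin n), (i : ℕ) ≠ (j : ℕ) → Sig i j = 0)
    (hσ : ∀ i : Fin (min m n),
      σ i = Sig ⟨i, lt_of_lt_of_le i.isLt (min_le_left m n)⟩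
              ⟨i, lt_of_lt_of_le i.isLt (min_le_right m n)⟩)
    (hdesc : ∀ i j : Fin (min m n), i ≤ j → σ j ≤ σ i)
    (hnonneg : ∀ i : Fin (min m n), 0 ≤ σ i)
    (lam : ℝ) (hlam : 0 < lam) :
    ∀ (D₀ : Matrix (Fin m) (Fin n) ℝ) (C : Matrix (Fin n) (Fin n) ℝ) (r : ℕ),
      D₀.rank = r → 1 ≤ r → D₀ = D₀ * C →
      (1 / 2) * (frobeniusNorm C) ^ 2 + (lam / 2) * (frobeniusNorm (D - D₀)) ^ 2 ≥
        (1 / 2) * (r : ℝ) +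
          (lam / 2) *
            ∑ i ∈ Finset.univ.filter (fun i : Fin (min m n) => r ≤ (i : ℕ)), (σ i) ^ 2 := by
  intro D₀ C r hrank hr1 hDC
  have hrn : r ≤ n := hrank ▸ Matrix.rank_le_width D₀
  ------------------------------------------------------------------
  -- Part 1 : ‖C‖_F² ≥ r
  ------------------------------------------------------------------
  have hrange : Module.finrank ℝ (LinearMap.range (D₀ᵀ).mulVecLin) = r := by
    have h : (D₀ᵀ).rank = r := by rw [Matrix.rank_transpose, hrank]
    exact h
  obtain ⟨W₁, hW₁o, hW₁mem⟩ := L2' (LinearMap.range (D₀ᵀ).mulVecLin) hrange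
  have hCW : Cᵀ * W₁ = W₁ := by
    ext i j
    obtain ⟨y, hy⟩ := hW₁mem j
    have hfix : Cᵀ *ᵥ (fun l => W₁ l j) = fun l => W₁ l j := by
      rw [← hy]
      show Cᵀ *ᵥ (D₀ᵀ *ᵥ y) = D₀ᵀ *ᵥ y
      rw [Matrix.mulVec_mulVec, ← Matrix.transpose_mul, ← hDC]
    calc (Cᵀ * W₁) i j = (Cᵀ *ᵥ (fun l => W₁ l j)) i := by
          simp [Matrix.mul_apply, Matrix.mulVec, dotProduct]
      _ = W₁ i j := by rw [hfix]
  have part1 : (r : ℝ) ≤ trace (C * Cᵀ) := by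
    have h := L1 Cᵀ W₁ hW₁o
    rw [hCW, hW₁o, Matrix.transpose_transpose] at h
    simpa using h
  ------------------------------------------------------------------
  -- Part 2 : ‖D - D₀‖_F² ≥ ∑_{i ≥ r} σᵢ²
  ------------------------------------------------------------------
  have hker : Module.finrank ℝ (LinearMap.ker D₀.mulVecLin) = n - r := by
    have h := LinearMap.finrank_range_add_finrank_ker D₀.mulVecLin
    have h2 : Module.finrank ℝ (Fin n → ℝ) = n := Module.finrank_fin_fun ℝ
    have h3 : Module.finrank ℝ (LinearMap.range D₀.mulVecLin) = r := hrank
    omega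
  obtain ⟨W₂, hW₂o, hW₂mem⟩ := L2' (LinearMap.ker D₀.mulVecLin) hker
  have hD₀W : D₀ * W₂ = 0 := by
    ext i j
    have h := hW₂mem j
    rw [LinearMap.mem_ker] at h
    have : D₀ *ᵥ (fun l => W₂ l j) = 0 := h
    calc (D₀ * W₂) i j = (D₀ *ᵥ (fun l => W₂ l j)) i := by
          simp [Matrix.mul_apply, Matrix.mulVec, dotProduct]
      _ = 0 := by rw [this]; rfl
  set E := D - D₀ with hE
  have hEW : E * W₂ = D * W₂ := by rw [hE, Matrix.sub_mul, hD₀W, sub_zero]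
  have part2a : trace ((D * W₂)ᵀ * (D * W₂)) ≤ trace (E * Eᵀ) := by
    calc trace ((D * W₂)ᵀ * (D * W₂)) = trace ((E * W₂)ᵀ * (E * W₂)) := by rw [hEW]
      _ ≤ trace (Eᵀ * E) := L1 E W₂ hW₂o
      _ = trace (E * Eᵀ) := Matrix.trace_mul_comm _ _
  -- spectral computation
  set G := Vᵀ * W₂ with hG
  have hVVt : V * Vᵀ = 1 := mul_eq_one_comm.mp hV
  have hGo : Gᵀ * G = 1 := by
    rw [hG, Matrix.transpose_mul, Matrix.transpose_transpose,
      show W₂ᵀ * V * (Vᵀ * W₂) = W₂ᵀ * ((V * Vᵀ) * W₂) by simp only [Matrix.mul_assoc],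
      hVVt, Matrix.one_mul, hW₂o]
  have hDW : D * W₂ = U * (Sig * G) := by
    rw [hSVD, hG]; simp only [Matrix.mul_assoc]
  have htr1 : trace ((D * W₂)ᵀ * (D * W₂)) = trace ((Sig * G)ᵀ * (Sig * G)) := by
    rw [hDW]; exact trace_conj U (Sig * G) hU
  set lamv : Fin n → ℝ := fun i => ∑ k, (Sig k i)^2 with hlamv
  set p : Fin n → ℝ := fun i => ∑ j, (G i j)^2 with hp
  have hdiag : Sigᵀ * Sig = Matrix.diagonal lamv := by
    ext i j
    by_cases hij : i = j
    · subst hij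
      simp [Matrix.mul_apply, Matrix.diagonal, hlamv, sq]
    · have hij' : (i : ℕ) ≠ (j : ℕ) := fun h => hij (Fin.ext h)
      rw [Matrix.diagonal_apply_ne _ hij]
      rw [Matrix.mul_apply]
      apply Finset.sum_eq_zero
      intro k _
      rcases eq_or_ne (k : ℕ) (i : ℕ) with h | h
      · have : (k : ℕ) ≠ (j : ℕ) := h ▸ hij'
        rw [Matrix.transpose_apply, hSigdiag k j this, mul_zero]
      · rw [Matrix.transpose_apply, hSigdiag k i h, zero_mul]
  have htr2 : trace ((Sig * G)ᵀ * (Sig * G)) = ∑ i, lamv i * p i := by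
    have ent : ∀ (i : Fin n) (x : Fin (n - r)),
        (Matrix.diagonal lamv * G) i x = lamv i * G i x := by
      intro i x
      rw [Matrix.mul_apply, Finset.sum_eq_single i]
      · rw [Matrix.diagonal_apply_eq]
      · intro b _ hb
        rw [Matrix.diagonal_apply_ne _ (Ne.symm hb), zero_mul]
      · intro h
        exact absurd (Finset.mem_univ _) h
    have e1 : (Sig * G)ᵀ * (Sig * G) = Gᵀ * (Matrix.diagonal lamv * G) := by
      rw [← hdiag]
      simp only [Matrix.transpose_mul, Matrix.mul_assoc]
    rw [e1, Matrix.trace]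
    simp only [Matrix.diag]
    have e2 : ∀ x : Fin (n - r), (Gᵀ * (Matrix.diagonal lamv * G)) x x
        = ∑ i, lamv i * (G i x * G i x) := by
      intro x
      rw [Matrix.mul_apply]
      apply Finset.sum_congr rfl
      intro i _
      rw [Matrix.transpose_apply, ent i x]
      ring
    rw [Finset.sum_congr rfl (fun x _ => e2 x), Finset.sum_comm]
    apply Finset.sum_congr rfl
    intro i _
    show ∑ x, lamv i * (G i x * G i x) = lamv i * ∑ x, (G i x)^2
    rw [Finset.mul_sum]
    apply Finset.sum_congr rfl
    intro x _
    ring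
  -- lamv facts
  have hlam_eq : ∀ i : Fin n, lamv i =
      if h : (i : ℕ) < min m n then (σ ⟨i, h⟩)^2 else 0 := by
    intro i
    by_cases h : (i : ℕ) < min m n
    · rw [dif_pos h]
      have him : (i : ℕ) < m := lt_of_lt_of_le h (min_le_left m n)
      show ∑ k, (Sig k i)^2 = (σ ⟨(i : ℕ), h⟩)^2
      rw [Finset.sum_eq_single (⟨(i : ℕ), him⟩ : Fin m)]
      · have heq := hσ ⟨(i : ℕ), h⟩
        rw [heq]
      · intro k _ hk
        have hkne : (k : ℕ) ≠ (i : ℕ) := by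
          intro hc
          exact hk (Fin.ext hc)
        rw [hSigdiag k i hkne]
        ring
      · intro hc
        exact absurd (Finset.mem_univ _) hc
    · rw [dif_neg h]
      have him : m ≤ (i : ℕ) := by
        rcases Nat.lt_or_ge (i : ℕ) m with h1 | h1
        · exact absurd (lt_min h1 i.isLt) h
        · exact h1
      show ∑ k, (Sig k i)^2 = 0
      apply Finset.sum_eq_zero
      intro k _
      have : (k : ℕ) ≠ (i : ℕ) := by
        have := k.isLt
        omega
      rw [hSigdiag k i this]
      ring
  have hmono : ∀ i j : Fin n, i ≤ j → lamv j ≤ lamv i := by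
    intro i j hij
    rw [hlam_eq i, hlam_eq j]
    by_cases hj : (j : ℕ) < min m n
    · have hi : (i : ℕ) < min m n := lt_of_le_of_lt hij hj
      rw [dif_pos hi, dif_pos hj]
      have h1 : σ ⟨(j : ℕ), hj⟩ ≤ σ ⟨(i : ℕ), hi⟩ := hdesc _ _ hij
      have h2 : 0 ≤ σ ⟨(j : ℕ), hj⟩ := hnonneg _
      nlinarith
    · rw [dif_neg hj]
      by_cases hi : (i : ℕ) < min m n
      · rw [dif_pos hi]; positivity
      · rw [dif_neg hi]
  have hnn : ∀ i : Fin n, 0 ≤ lamv i := by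
    intro i
    show 0 ≤ ∑ k, (Sig k i)^2
    positivity
  -- p facts
  have hp0 : ∀ i : Fin n, 0 ≤ p i := by
    intro i
    show 0 ≤ ∑ j, (G i j)^2
    positivity
  set P := G * Gᵀ with hPdef
  have hPsym : Pᵀ = P := by
    rw [hPdef, Matrix.transpose_mul, Matrix.transpose_transpose]
  have hPii : ∀ i, p i = P i i := by
    intro i
    show ∑ j, (G i j)^2 = (G * Gᵀ) i i
    simp [Matrix.mul_apply, sq]
  have hPP : P * P = P := by
    rw [hPdef, show G * Gᵀ * (G * Gᵀ) = G * ((Gᵀ * G) * Gᵀ) by simp only [Matrix.mul_assoc],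
      hGo, Matrix.one_mul]
  have hp1 : ∀ i : Fin n, p i ≤ 1 := by
    intro i
    have h1 : p i = ∑ k, (P i k)^2 := by
      calc p i = P i i := hPii i
        _ = (P * P) i i := by rw [hPP]
        _ = ∑ k, P i k * P k i := Matrix.mul_apply
        _ = ∑ k, (P i k)^2 := by
            apply Finset.sum_congr rfl
            intro k _
            have hk : P k i = P i k :=
              ((congrFun (congrFun hPsym k) i).symm).trans (Matrix.transpose_apply P k i)
            rw [hk]; ring
    have hle : (P i i)^2 ≤ ∑ k, (P i k)^2 :=
      Finset.single_le_sum (f := fun k => (P i k)^2) (fun k _ => sq_nonneg _) (Finset.mem_univ i)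
    have h1' : P i i = ∑ k, (P i k)^2 := (hPii i).symm.trans h1
    have h2 : (p i)^2 ≤ p i := by
      rw [hPii i]
      conv_rhs => rw [h1']
      exact hle
    nlinarith [hp0 i]
  have hpsum : ∑ i, p i = (n : ℝ) - r := by
    have h2 := trace_sq Gᵀ
    rw [Matrix.transpose_transpose, hGo, Matrix.trace_one] at h2
    have h3 : ∑ i, p i = ∑ j : Fin (n - r), ∑ i : Fin n, (Gᵀ j i)^2 := by
      calc ∑ i, p i = ∑ i : Fin n, ∑ j : Fin (n - r), (Gᵀ j i)^2 := by
            apply Finset.sum_congr rfl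
            intro i _
            show ∑ j, (G i j)^2 = _
            exact Finset.sum_congr rfl (fun j _ => by rw [Matrix.transpose_apply])
        _ = ∑ j, ∑ i, (Gᵀ j i)^2 := Finset.sum_comm
    rw [h3, ← h2, Fintype.card_fin, Nat.cast_sub hrn]
  -- apply L3
  have main2 : ∑ i ∈ Finset.univ.filter (fun i : Fin n => r ≤ (i : ℕ)), lamv i
      ≤ trace (E * Eᵀ) := by
    calc ∑ i ∈ Finset.univ.filter (fun i : Fin n => r ≤ (i : ℕ)), lamv i
        ≤ ∑ i, lamv i * p i := L3 hrn lamv p hmono hnn hp0 hp1 hpsum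
      _ = trace ((Sig * G)ᵀ * (Sig * G)) := htr2.symm
      _ = trace ((D * W₂)ᵀ * (D * W₂)) := htr1.symm
      _ ≤ trace (E * Eᵀ) := part2a
  -- reindex the sum
  have hreindex : ∑ i ∈ Finset.univ.filter (fun i : Fin (min m n) => r ≤ (i : ℕ)), (σ i)^2
      = ∑ i ∈ Finset.univ.filter (fun i : Fin n => r ≤ (i : ℕ)), lamv i := by
    set F : ℕ → ℝ := fun x => if h : x < min m n then (if r ≤ x then (σ ⟨x, h⟩)^2 else 0) else 0
      with hF
    have lhs_eq : ∑ i ∈ Finset.univ.filter (fun i : Fin (min m n) => r ≤ (i : ℕ)), (σ i)^2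
        = ∑ x ∈ Finset.range (min m n), F x := by
      rw [Finset.sum_filter, ← Fin.sum_univ_eq_sum_range F (min m n)]
      apply Finset.sum_congr rfl
      intro i _
      show _ = F (i : ℕ)
      simp only [hF, dif_pos i.isLt]
    have rhs_eq : ∑ i ∈ Finset.univ.filter (fun i : Fin n => r ≤ (i : ℕ)), lamv i
        = ∑ x ∈ Finset.range n, F x := by
      rw [Finset.sum_filter, ← Fin.sum_univ_eq_sum_range F n]
      apply Finset.sum_congr rfl
      intro i _
      show _ = F (i : ℕ)
      rw [hlam_eq i]
      simp only [hF]
      by_cases h : (i : ℕ) < min m n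
      · simp only [dif_pos h]
      · simp only [dif_neg h]
        by_cases hr : r ≤ (i : ℕ) <;> simp [hr]
    have hsub : ∑ x ∈ Finset.range n, F x = ∑ x ∈ Finset.range (min m n), F x := by
      rw [Finset.sum_subset (Finset.range_subset_range.mpr (min_le_right m n))]
      intro x _ hx
      rw [Finset.mem_range, not_lt] at hx
      simp only [hF, dif_neg (not_lt.mpr hx)]
    rw [lhs_eq, rhs_eq, hsub]
  -- finish
  have hC2 : (frobeniusNorm C)^2 = trace (C * Cᵀ) := frob_sq C
  have hE2 : (frobeniusNorm (D - D₀))^2 = trace (E * Eᵀ) := by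
    rw [hE]; exact frob_sq (D - D₀)
  have hfinal2 : ∑ i ∈ Finset.univ.filter (fun i : Fin (min m n) => r ≤ (i : ℕ)), (σ i)^2
      ≤ (frobeniusNorm (D - D₀))^2 := by
    rw [hE2, hreindex]; exact main2
  have hfinal1 : (r : ℝ) ≤ (frobeniusNorm C)^2 := by rw [hC2]; exact part1
  have : 0 < lam / 2 := by linarith
  nlinarith [mul_le_mul_of_nonneg_left hfinal2 (le_of_lt this),
    mul_le_mul_of_nonneg_left hfinal1 (by norm_num : (0:ℝ) ≤ 1/2)]
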